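/- Let k_o > 0, let α : ℝ → ℝ be continuous and bounded, and let d : ℝ → ℝ be twice differentiable with d(0) > 0 and d(t) > 0 for all t ≥ 0, satisfying d''(t) = −k_o·d'(t)/d(t) − α(t) for all t ≥ 0. If d(t) → 0 as t → ∞, then ∫₀ᵗ α(τ) dτ → +∞ as t → ∞. -/

import Mathlib

open Filter

/-- Forward implication of item 2 of Lemma 1: if the distance `d` governed by
the barrier ODE `d'' = -k_o * d'/d - α` (with `d > 0` on `[0, ∞)`) converges
to zero, then `∫₀ᵗ α → +∞`. -/
theorem barrier_tendsto_zero_implies_integral_infinite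
    (k_o : ℝ) (hk : 0 < k_o) (α d : ℝ → ℝ)
    (hα_cont : Continuous α) (hα_bdd : ∃ M, ∀ t, |α t| ≤ M)
    (hd1 : Differentiable ℝ d) (hd2 : Differentiable ℝ (deriv d))
    (hd0 : 0 < d 0) (hdpos : ∀ t ≥ (0:ℝ), 0 < d t)
    (hode : ∀ t ≥ (0:ℝ),
      deriv (deriv d) t = -k_o * deriv d t / d t - α t)
    (hdlim : Tendsto d atTop (nhds 0)) :
    Tendsto (fun t => ∫ τ in (0:ℝ)..t, α τ) atTop atTop := by
  classical
  set E : ℝ → ℝ := fun t => deriv d t + k_o * Real.log (d t) with hE_def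
  clear_value E
  -- derivative of E
  have hE : ∀ t ≥ (0:ℝ), HasDerivAt E (-α t) t := by
    intro t ht
    have h1 : HasDerivAt (deriv d) (deriv (deriv d) t) t := (hd2 t).hasDerivAt
    have h2 : HasDerivAt (fun s => Real.log (d s)) (deriv d t / d t) t :=
      ((hd1 t).hasDerivAt).log (hdpos t ht).ne'
    have h3 := h1.add (h2.const_mul k_o)
    have : deriv (deriv d) t + k_o * (deriv d t / d t) = -α t := by
      rw [hode t ht]; ring
    rw [this] at h3
    rw [hE_def]
    exact h3
  -- FTC
  have hInt : ∀ a b : ℝ, 0 ≤ a → a ≤ b → (∫ τ in a..b, α τ) = E a - E b := by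
    intro a b ha hab
    have h := intervalIntegral.integral_eq_sub_of_hasDerivAt
      (f := E) (f' := fun τ => -α τ)
      (fun x hx => by
        have hx' : 0 ≤ x := le_trans ha (by
          rcases Set.mem_uIcc.1 hx with h | h
          · exact h.1
          · linarith [h.1, h.2])
        exact hE x hx')
      ((hα_cont.neg).intervalIntegrable a b)
    have : (∫ τ in a..b, -α τ) = -∫ τ in a..b, α τ := intervalIntegral.integral_neg
    rw [this] at h
    linarith
  obtain ⟨M₀, hM₀⟩ := hα_bdd
  set M : ℝ := max M₀ 1 with hM_def
  have hM1 : (1:ℝ) ≤ M := le_max_right _ _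
  have hMpos : (0:ℝ) < M := lt_of_lt_of_le one_pos hM1
  have hM : ∀ t, |α t| ≤ M := fun t => le_trans (hM₀ t) (le_max_left _ _)
  -- bound on increments of E
  have hBound : ∀ s t : ℝ, 0 ≤ s → s ≤ t → |E t - E s| ≤ M * (t - s) := by
    intro s t hs hst
    have h := hInt s t hs hst
    have hb : ‖∫ τ in s..t, α τ‖ ≤ M * |t - s| :=
      intervalIntegral.norm_integral_le_of_norm_le_const
        (fun x _ => by rw [Real.norm_eq_abs]; exact hM x)
    rw [Real.norm_eq_abs, abs_of_nonneg (show (0:ℝ) ≤ t - s by linarith)] at hb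
    have : E t - E s = -∫ τ in s..t, α τ := by linarith
    rw [this, abs_neg]
    exact hb
  -- E tends to -∞
  have hE_atBot : Tendsto E atTop atBot := by
    rw [tendsto_atBot]
    intro C
    set δ : ℝ := 1 / (2 * M) with hδ_def
    have hδpos : 0 < δ := by positivity
    set dstar : ℝ := min (Real.exp ((C - 3/2) / k_o)) (1 / (4 * M)) with hdstar_def
    have hdstar_pos : 0 < dstar := lt_min (Real.exp_pos _) (by positivity)
    have hev : ∀ᶠ s in atTop, d s ≤ dstar :=
      hdlim.eventually (eventually_le_nhds hdstar_pos)
    obtain ⟨T₀, hT₀⟩ := eventually_atTop.1 hev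
    set T : ℝ := max T₀ 0 with hT_def
    have hTnonneg : (0:ℝ) ≤ T := le_max_right _ _
    filter_upwards [eventually_ge_atTop (T + δ)] with t ht
    by_contra hEt
    push_neg at hEt
    -- for s in [t - δ, t], everything holds
    have hts : T ≤ t - δ := by linarith
    have hds : ∀ s ∈ Set.Icc (t - δ) t, d s ≤ dstar := by
      intro s hs
      exact hT₀ s (le_trans (le_max_left _ _) (le_trans hts hs.1))
    have hsnonneg : ∀ s ∈ Set.Icc (t - δ) t, (0:ℝ) ≤ s := by
      intro s hs
      linarith [hs.1, hts, hTnonneg]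
    have hderiv1 : ∀ s ∈ Set.Icc (t - δ) t, (1:ℝ) ≤ deriv d s := by
      intro s hs
      have hs0 : (0:ℝ) ≤ s := hsnonneg s hs
      have hEdiff : |E t - E s| ≤ M * (t - s) := hBound s t hs0 hs.2
      have hMδ : M * (t - s) ≤ 1 / 2 := by
        have h1 : t - s ≤ δ := by linarith [hs.1]
        have := mul_le_mul_of_nonneg_left h1 hMpos.le
        calc M * (t - s) ≤ M * δ := this
          _ = M * (1 / (2 * M)) := by rw [hδ_def]
          _ = 1 / 2 := by field_simp
      have hEs : C - 1/2 ≤ E s := by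
        obtain ⟨hl, hr⟩ := abs_le.1 hEdiff
        linarith
      have hlog : k_o * Real.log (d s) ≤ C - 3/2 := by
        have hds' : d s ≤ dstar := hds s hs
        have hdspos : 0 < d s := hdpos s hs0
        have h1 : Real.log (d s) ≤ Real.log dstar := Real.log_le_log hdspos hds'
        have h2 : Real.log dstar ≤ (C - 3/2) / k_o := by
          calc Real.log dstar ≤ Real.log (Real.exp ((C - 3/2) / k_o)) :=
                Real.log_le_log hdstar_pos (min_le_left _ _)
            _ = (C - 3/2) / k_o := Real.log_exp _
        have h3 : Real.log (d s) ≤ (C - 3/2) / k_o := le_trans h1 h2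
        calc k_o * Real.log (d s) ≤ k_o * ((C - 3/2) / k_o) :=
              mul_le_mul_of_nonneg_left h3 hk.le
          _ = C - 3/2 := by field_simp
      have : E s = deriv d s + k_o * Real.log (d s) := by rw [hE_def]
      linarith
    -- monotonicity argument
    have hmono : MonotoneOn (fun s => d s - s) (Set.Icc (t - δ) t) := by
      apply monotoneOn_of_deriv_nonneg (convex_Icc _ _)
      · exact ((hd1.continuous.sub continuous_id).continuousOn)
      · exact (hd1.sub differentiable_id).differentiableOn
      · intro x hx
        rw [interior_Icc] at hx
        have hx' : x ∈ Set.Icc (t - δ) t := Set.mem_Icc.2 ⟨hx.1.le, hx.2.le⟩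
        have hdx := hderiv1 x hx'
        have : deriv (fun s => d s - s) x = deriv d x - 1 := by
          rw [deriv_fun_sub (g := fun s : ℝ => s) (hd1 x) differentiableAt_id]
          simp
        rw [this]
        linarith
    have hmem1 : t - δ ∈ Set.Icc (t - δ) t := Set.mem_Icc.2 ⟨le_refl _, by linarith⟩
    have hmem2 : t ∈ Set.Icc (t - δ) t := Set.mem_Icc.2 ⟨by linarith, le_refl _⟩
    have hg := hmono hmem1 hmem2 (by linarith)
    simp only at hg
    -- d t ≥ d (t - δ) + δ > δ
    have hdtδpos : 0 < d (t - δ) := hdpos _ (hsnonneg _ hmem1)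
    have hdt_large : δ < d t := by linarith
    have hdt_small : d t ≤ 1 / (4 * M) := le_trans (hds t hmem2) (min_le_right _ _)
    have : (1:ℝ) / (4 * M) < 1 / (2 * M) := by
      apply div_lt_div_of_pos_left one_pos (by positivity)
      linarith
    linarith [hdt_large, hdt_small]
  -- conclude
  have heq : ∀ᶠ t in atTop, (∫ τ in (0:ℝ)..t, α τ) = E 0 - E t := by
    filter_upwards [eventually_ge_atTop (0:ℝ)] with t ht
    exact hInt 0 t le_rfl ht
  have hlim : Tendsto (fun t => E 0 - E t) atTop atTop := by
    have h1 : Tendsto (fun t => -E t) atTop atTop :=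
      tendsto_neg_atBot_atTop.comp hE_atBot
    have h2 : Tendsto (fun t => E 0 + -E t) atTop atTop :=
      tendsto_atTop_add_const_left _ _ h1
    simpa [sub_eq_add_neg] using h2
  have heq' : (fun t => ∫ τ in (0:ℝ)..t, α τ) =ᶠ[atTop] fun t => E 0 - E t := heq
  exact hlim.congr' heq'.symm
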